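/- Let α ∈ (0,1], γ > 0, and δ > 0. Let y : [0,∞) → [0,∞) be differentiable and satisfy y'(t) = −2γ · y(t)/(y(t) + δ)^{α/2} for all t ≥ 0. Then for every t ≥ 0, y(t) ≤ y(0) · exp( −2γ t / (y(0) + δ)^{α/2} ). -/

import Mathlib

/-- Let α ∈ (0,1], γ > 0, δ > 0. If y : [0,∞) → [0,∞) is differentiable with
y'(t) = −2γ y(t)/(y(t)+δ)^{α/2} for all t ≥ 0, then for every t ≥ 0,
y(t) ≤ y(0) exp(−2γt/(y(0)+δ)^{α/2}). -/
theorem stmt_13 (α γ δ : ℝ) (hα : 0 < α) (hα1 : α ≤ 1) (hγ : 0 < γ) (hδ : 0 < δ)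
    (y : ℝ → ℝ) (hynn : ∀ t, 0 ≤ t → 0 ≤ y t)
    (hy' : ∀ t, 0 ≤ t →
      HasDerivWithinAt y (-(2 * γ) * y t / (y t + δ) ^ (α / 2)) (Set.Ici (0 : ℝ)) t) :
    ∀ t, 0 ≤ t → y t ≤ y 0 * Real.exp (-(2 * γ) * t / (y 0 + δ) ^ (α / 2)) := by
  have hyder : ∀ x ∈ interior (Set.Ici (0:ℝ)),
      HasDerivWithinAt y (-(2 * γ) * y x / (y x + δ) ^ (α / 2)) (interior (Set.Ici (0:ℝ))) x := by
    intro x hx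
    rw [interior_Ici] at hx ⊢
    exact (hy' x hx.le).mono Set.Ioi_subset_Ici_self
  have hcont : ContinuousOn y (Set.Ici (0:ℝ)) := fun x hx =>
    (hy' x hx).continuousWithinAt
  have hpos : ∀ t, 0 ≤ t → 0 < (y t + δ) ^ (α / 2) :=
    fun t ht => Real.rpow_pos_of_pos (by linarith [hynn t ht]) _
  -- y is antitone on Ici 0
  have hanti : AntitoneOn y (Set.Ici (0:ℝ)) := by
    apply antitoneOn_of_hasDerivWithinAt_nonpos (convex_Ici 0) hcont hyder
    intro x hx
    rw [interior_Ici] at hx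
    have h1 := hynn x hx.le
    have h2 := hpos x hx.le
    apply div_nonpos_of_nonpos_of_nonneg _ h2.le
    nlinarith
  have hy0 : ∀ t, 0 ≤ t → y t ≤ y 0 := fun t ht =>
    hanti (Set.self_mem_Ici) ht ht
  set K : ℝ := 2 * γ / (y 0 + δ) ^ (α / 2) with hK
  have hKpos : 0 < K := div_pos (by linarith) (hpos 0 le_rfl)
  -- g t = y t * exp (K t) is antitone
  have hganti : AntitoneOn (fun t => y t * Real.exp (K * t)) (Set.Ici (0:ℝ)) := by
    apply antitoneOn_of_hasDerivWithinAt_nonpos (convex_Ici 0)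
      (f' := fun t => -(2 * γ) * y t / (y t + δ) ^ (α / 2) * Real.exp (K * t)
        + y t * (K * Real.exp (K * t)))
    · exact hcont.mul (Real.continuous_exp.comp (continuous_const.mul continuous_id)).continuousOn
    · intro x hx
      have hexp : HasDerivAt (fun t => Real.exp (K * t)) (K * Real.exp (K * x)) x := by
        simpa [mul_comm] using (((hasDerivAt_id x).const_mul K)).exp
      exact (hyder x hx).mul hexp.hasDerivWithinAt
    · intro x hx
      rw [interior_Ici] at hx
      have hxle := (Set.mem_Ioi.mp hx).le
      have h1 := hynn x hxle
      have h2 := hpos x hxle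
      have h3 := hpos 0 le_rfl
      have hexp : 0 < Real.exp (K * x) := Real.exp_pos _
      -- need: -(2γ) y x / (y x + δ)^(α/2) + K * y x ≤ 0
      have hmono : (y x + δ) ^ (α / 2) ≤ (y 0 + δ) ^ (α / 2) := by
        apply Real.rpow_le_rpow (by linarith) (by linarith [hy0 x hxle]) (by positivity)
      have key : K * y x ≤ 2 * γ * y x / (y x + δ) ^ (α / 2) := by
        rw [hK, div_mul_eq_mul_div, div_le_div_iff₀ h3 h2]
        have : 2 * γ * y x * (y x + δ) ^ (α / 2) ≤ 2 * γ * y x * (y 0 + δ) ^ (α / 2) := by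
          apply mul_le_mul_of_nonneg_left hmono (by positivity)
        linarith
      have : -(2 * γ) * y x / (y x + δ) ^ (α / 2) + y x * K ≤ 0 := by
        rw [neg_mul, neg_div]
        linarith [key, mul_comm (y x) K]
      nlinarith
  intro t ht
  have := hganti Set.self_mem_Ici ht ht
  simp only [mul_zero, Real.exp_zero, mul_one] at this
  have hfin : y t ≤ y 0 * Real.exp (-(K * t)) := by
    rw [Real.exp_neg, ← div_eq_mul_inv, le_div_iff₀ (Real.exp_pos _)]
    linarith [this]
  have : -(2 * γ) * t / (y 0 + δ) ^ (α / 2) = -(K * t) := by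
    rw [hK]; ring
  rw [this]
  exact hfin
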